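/- Let C ⊆ R^n be a submodule (linear code) over an Artinian local ring R. The minimum Hamming weight of nonzero elements of C equals the minimum Hamming weight of nonzero elements of soc(C). -/

import Mathlib

open IsLocalRing

/-- Length of a module, as a natural number: the Krull dimension of its submodule lattice
(i.e. the supremum of lengths of chains of submodules). -/
noncomputable def lenN (R M : Type*) [CommRing R] [AddCommGroup M] [Module R M] : ℕ :=
  ((WithBot.unbotD 0 (Order.krullDim (Submodule R M)))).toNat

/-- The socle of a module over a local ring: elements killed by the maximal ideal. -/
abbrev socle (R M : Type*) [CommRing R] [IsLocalRing R] [AddCommGroup M] [Module R M] :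
    Submodule R M :=
  Submodule.torsionBySet R M (maximalIdeal R)

/-- type(M) = dim_K soc(M), the dimension of the socle over the residue field K = R/m. -/
noncomputable def typeOf (R M : Type*) [CommRing R] [IsLocalRing R] [AddCommGroup M]
    [Module R M] : ℕ :=
  Module.finrank (R ⧸ maximalIdeal R) (socle R M)

/-- Minimal number of generators of a module. -/
noncomputable def mu (R M : Type*) [CommRing R] [AddCommGroup M] [Module R M] : ℕ :=
  sInf {k : ℕ | ∃ s : Finset M, s.card = k ∧ Submodule.span R (s : Set M) = ⊤}

/-- Free rank: the largest r admitting an R-linear surjection M → R^r. -/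
noncomputable def freeRank (R M : Type*) [CommRing R] [AddCommGroup M] [Module R M] : ℕ :=
  sSup {r : ℕ | ∃ f : M →ₗ[R] (Fin r → R), Function.Surjective f}

/-- An Artinian local ring is Frobenius if its socle is 1-dimensional over the residue field. -/
def IsFrobenius (R : Type*) [CommRing R] [IsLocalRing R] : Prop :=
  typeOf R R = 1

/-- The orthogonal (dual) code with respect to the standard bilinear form on R^n. -/
def dualCode {R : Type*} [CommRing R] {n : ℕ} (C : Submodule R (Fin n → R)) :
    Submodule R (Fin n → R) where
  carrier := {v | ∀ w ∈ C, ∑ i, v i * w i = 0}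
  zero_mem' := by intro w _; simp
  add_mem' := by
    intro a b ha hb w hw
    simpa [add_mul, Finset.sum_add_distrib] using by rw [ha w hw, hb w hw, add_zero]
  smul_mem' := by
    intro c a ha w hw
    simp only [Set.mem_setOf_eq] at ha ⊢
    simp [Pi.smul_apply, smul_eq_mul, mul_assoc, ← Finset.mul_sum, ha w hw]

/-- The submodule H_A of vectors of R^n supported on a set A of coordinates. -/
def suppCode (R : Type*) [CommRing R] {n : ℕ} (A : Finset (Fin n)) :
    Submodule R (Fin n → R) where
  carrier := {v | ∀ i, i ∉ A → v i = 0}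
  zero_mem' := by intro i _; simp
  add_mem' := by intro a b ha hb i hi; simp [ha i hi, hb i hi]
  smul_mem' := by intro c a ha i hi; simp [ha i hi]

open Classical in
/-- Hamming weight of a vector. -/
noncomputable def wt {R : Type*} [CommRing R] {n : ℕ} (v : Fin n → R) : ℕ :=
  (Finset.univ.filter (fun i => v i ≠ 0)).card

/-- Minimum Hamming distance (= minimum weight of a nonzero codeword) of a code. -/
noncomputable def dH {R : Type*} [CommRing R] {n : ℕ} (C : Submodule R (Fin n → R)) : ℕ :=
  sInf {w : ℕ | ∃ v ∈ C, v ≠ 0 ∧ wt v = w}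

/-- The coordinatewise reduction R^n → K^n modulo the maximal ideal. -/
def rho (R : Type*) [CommRing R] [IsLocalRing R] {n : ℕ} (v : Fin n → R) :
    Fin n → R ⧸ maximalIdeal R :=
  fun i => Ideal.Quotient.mk (maximalIdeal R) (v i)

lemma wt_smul_le {R : Type*} [CommRing R] {n : ℕ} (a : R) (v : Fin n → R) :
    wt (a • v) ≤ wt v := by
  classical
  unfold wt
  apply Finset.card_le_card
  intro i hi
  simp only [Finset.mem_filter, Finset.mem_univ, true_and] at hi ⊢
  intro h
  exact hi (by simp [h])

lemma socle_reduce {R : Type*} [CommRing R] [IsLocalRing R] [IsArtinianRing R]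
    {n : ℕ} {C : Submodule R (Fin n → R)} {v : Fin n → R} (hv : v ∈ C) (hv0 : v ≠ 0) :
    ∃ w, w ∈ C ⊓ socle R (Fin n → R) ∧ w ≠ 0 ∧ wt w ≤ wt v := by
  obtain ⟨N, hN⟩ := IsArtinianRing.isNilpotent_jacobson_bot (R := R)
  have hmax : maximalIdeal R = Ideal.jacobson ⊥ :=
    (IsLocalRing.jacobson_eq_maximalIdeal ⊥ bot_ne_top).symm
  have hP : ∃ k, ∀ a ∈ (maximalIdeal R) ^ k, a • v = 0 := by
    refine ⟨N, fun a ha => ?_⟩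
    rw [hmax] at ha
    rw [hN] at ha
    rw [show a = 0 by simpa using ha, zero_smul]
  classical
  set k := Nat.find hP with hk
  have hkspec : ∀ a ∈ (maximalIdeal R) ^ k, a • v = 0 := Nat.find_spec hP
  have hk0 : k ≠ 0 := by
    intro h
    have h1 : (1 : R) ∈ (maximalIdeal R) ^ k := by
      simp [h]
    have := hkspec 1 h1
    rw [one_smul] at this
    exact hv0 this
  have hlt : ¬ ∀ a ∈ (maximalIdeal R) ^ (k - 1), a • v = 0 :=
    Nat.find_min hP (Nat.sub_lt (Nat.pos_of_ne_zero hk0) one_pos)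
  push_neg at hlt
  obtain ⟨a, ha, hav⟩ := hlt
  refine ⟨a • v, ⟨Submodule.smul_mem C a hv, ?_⟩, hav, wt_smul_le a v⟩
  show a • v ∈ Submodule.torsionBySet R (Fin n → R) ((maximalIdeal R : Ideal R) : Set R)
  rw [Submodule.mem_torsionBySet_iff]
  rintro ⟨b, hb⟩
  have : b * a ∈ (maximalIdeal R) ^ k := by
    have := Ideal.mul_mem_mul hb ha
    rwa [← pow_succ', Nat.sub_add_cancel (Nat.one_le_iff_ne_zero.mpr hk0)] at this
  have := hkspec _ this
  rw [mul_smul] at this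
  simpa using this

/-- the minimum Hamming weight of a nonzero code C ⊆ R^n equals
that of its socle soc(C) = C ∩ soc(R^n). -/
theorem stmt5 (R : Type*) [CommRing R] [IsLocalRing R] [IsArtinianRing R]
    {n : ℕ} (C : Submodule R (Fin n → R)) (hC : C ≠ ⊥) :
    dH C = dH (C ⊓ socle R (Fin n → R)) := by
  obtain ⟨v0, hv0C, hv00⟩ : ∃ v ∈ C, v ≠ 0 := by
    by_contra h
    push_neg at h
    exact hC (le_bot_iff.mp fun x hx => Submodule.mem_bot _ |>.mpr
      (by by_contra hx0; exact hx0 (h x hx)))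
  have hSC : {w : ℕ | ∃ v ∈ C, v ≠ 0 ∧ wt v = w}.Nonempty := ⟨wt v0, v0, hv0C, hv00, rfl⟩
  obtain ⟨vm, hvmC, hvm0, hvmw⟩ := Nat.sInf_mem hSC
  obtain ⟨w, hwmem, hw0, hwle⟩ := socle_reduce hvmC hvm0
  have hSs : {w : ℕ | ∃ v ∈ C ⊓ socle R (Fin n → R), v ≠ 0 ∧ wt v = w}.Nonempty :=
    ⟨wt w, w, hwmem, hw0, rfl⟩
  apply le_antisymm
  · -- any socle codeword is a codeword
    obtain ⟨u, humem, hu0, huw⟩ := Nat.sInf_mem hSs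
    calc dH C ≤ wt u := Nat.sInf_le ⟨u, humem.1, hu0, rfl⟩
      _ = dH (C ⊓ socle R (Fin n → R)) := huw
  · calc dH (C ⊓ socle R (Fin n → R)) ≤ wt w := Nat.sInf_le ⟨w, hwmem, hw0, rfl⟩
      _ ≤ wt vm := hwle
      _ = dH C := hvmw
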